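/- Let ζ and ζ' be the optimal values of the continuous relaxations (in which every binary constraint u_i ∈ {0,1} is replaced by 0 ≤ u_i ≤ 1 and every binary constraint z_{ij}^l ∈ {0,1} is replaced by 0 ≤ z_{ij}^l ≤ 1) of formulation (LocP-F1) and of formulation (LocP-F2), respectively. Then ζ ≤ ζ'. -/

import Mathlib

open scoped BigOperators ENNReal

attribute [local instance] Classical.propDecidable

/-- The ℓ_p norm on ℝ^d for an extended-real exponent `p` (with `‖x‖_∞ = max_k |x_k|`). -/
noncomputable def lpnorm {d : ℕ} (p : ℝ≥0∞) (x : Fin d → ℝ) : ℝ :=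
  if p = ∞ then ⨆ k, |x k| else (∑ k, |x k| ^ p.toReal) ^ (1 / p.toReal)

/-- Out-neighbours of `i` in the adjacency relation `Adj`. -/
noncomputable def outN {m : ℕ} (Adj : Fin m → Fin m → Prop) (i : Fin m) : Finset (Fin m) :=
  Finset.univ.filter (fun j => Adj i j)

/-- In-neighbours of `i` in the adjacency relation `Adj`. -/
noncomputable def inN {m : ℕ} (Adj : Fin m → Fin m → Prop) (i : Fin m) : Finset (Fin m) :=
  Finset.univ.filter (fun h => Adj h i)

lemma lpnorm_eq_norm {d : ℕ} (p : ℝ≥0∞) (hp : 1 ≤ p) (x : Fin d → ℝ) :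
    lpnorm p x = @norm (PiLp p fun _ : Fin d => ℝ) _ (WithLp.toLp p x) := by
  haveI : Fact (1 ≤ p) := ⟨hp⟩
  rcases eq_or_ne p ∞ with h | h
  · subst h
    rw [lpnorm, if_pos rfl, PiLp.norm_eq_ciSup]
    simp [Real.norm_eq_abs]
  · have h0 : 0 < p.toReal := ENNReal.toReal_pos (zero_lt_one.trans_le hp).ne' h
    rw [lpnorm, if_neg h, PiLp.norm_eq_sum h0]
    simp [Real.norm_eq_abs]

lemma lpnorm_nonneg {d : ℕ} {p : ℝ≥0∞} (hp : 1 ≤ p) (x : Fin d → ℝ) : 0 ≤ lpnorm p x := by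
  haveI : Fact (1 ≤ p) := ⟨hp⟩
  rw [lpnorm_eq_norm p hp]
  exact norm_nonneg (E := PiLp p fun _ : Fin d => ℝ) (WithLp.toLp p x)

lemma lpnorm_add_le {d : ℕ} {p : ℝ≥0∞} (hp : 1 ≤ p) (x y : Fin d → ℝ) :
    lpnorm p (x + y) ≤ lpnorm p x + lpnorm p y := by
  haveI : Fact (1 ≤ p) := ⟨hp⟩
  have := norm_add_le (E := PiLp p fun _ : Fin d => ℝ) (WithLp.toLp p x) (WithLp.toLp p y)
  simpa [lpnorm_eq_norm p hp] using this

lemma lpnorm_sum_le {d : ℕ} {p : ℝ≥0∞} (hp : 1 ≤ p) {ι : Type*} (s : Finset ι)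
    (f : ι → (Fin d → ℝ)) :
    lpnorm p (∑ i ∈ s, f i) ≤ ∑ i ∈ s, lpnorm p (f i) := by
  haveI : Fact (1 ≤ p) := ⟨hp⟩
  have := norm_sum_le (E := PiLp p fun _ : Fin d => ℝ) s (fun i => WithLp.toLp p (f i))
  rw [← WithLp.toLp_sum] at this
  simp only [← lpnorm_eq_norm p hp] at this
  exact this

lemma sum_ind {α : Type*} (s : Finset α) (b : α) [∀ a, Decidable (a = b)] (hb : b ∈ s) :
    (∑ a ∈ s, if a = b then (1:ℝ) else 0) = 1 := by
  rw [Finset.sum_eq_single b (fun c _ hc => if_neg hc) (fun hb' => absurd hb hb'), if_pos rfl]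

structure PFlow {m : ℕ} (Adj : Fin m → Fin m → Prop) (i0 a : Fin m)
    (z : Fin m → Fin m → ℝ) : Prop where
  zero_one : ∀ i j, z i j = 0 ∨ z i j = 1
  adj : ∀ i j, z i j ≠ 0 → Adj i j
  in_src : ∑ h ∈ inN Adj a, z h a = 0
  out_src : ∑ j ∈ outN Adj a, z a j = 1 - (if a = i0 then (1:ℝ) else 0)
  balance : ∀ i, i ≠ a →
    (∑ j ∈ outN Adj i, z i j) + (if i = i0 then (1:ℝ) else 0) = ∑ h ∈ inN Adj i, z h i
  in_le : ∀ i, ∑ h ∈ inN Adj i, z h i ≤ 1 - (if a = i0 then (1:ℝ) else 0)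
  out_le : ∀ i, ∑ j ∈ outN Adj i, z i j ≤ 1 - (if a = i0 then (1:ℝ) else 0)

lemma pflow_of_walk {m : ℕ} (G : SimpleGraph (Fin m)) :
    ∀ (a c : Fin m) (w : G.Walk a c), w.support.Nodup →
    ∃ z : Fin m → Fin m → ℝ, PFlow G.Adj c a z ∧
      (∀ i j, z i j ≠ 0 → i ∈ w.support ∧ j ∈ w.support) := by
  intro a c w
  induction w with
  | nil =>
    intro _
    refine ⟨fun _ _ => 0, ⟨fun i j => Or.inl rfl, fun i j h => absurd rfl h, by simp, by simp,
      fun i hi => by simp [if_neg hi], fun i => by simp, fun i => by simp⟩,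
      fun i j h => absurd rfl h⟩
  | @cons a' b' c' h p ih =>
    intro hnd
    rw [SimpleGraph.Walk.support_cons, List.nodup_cons] at hnd
    obtain ⟨hans, hndp⟩ := hnd
    obtain ⟨z, pf, hsupp⟩ := ih hndp
    have hzra : ∀ j, z a' j = 0 := fun j => by
      by_contra hne; exact hans (hsupp _ _ hne).1
    have hzla : ∀ i, z i a' = 0 := fun i => by
      by_contra hne; exact hans (hsupp _ _ hne).2
    have hai0 : a' ≠ c' := fun h' => hans (h' ▸ p.end_mem_support)
    have hab : a' ≠ b' := G.ne_of_adj h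
    have hb : b' ∈ outN G.Adj a' := by simp [outN, h]
    have hbin : a' ∈ inN G.Adj b' := by simp [inN, h]
    refine ⟨fun i j => z i j + (if i = a' ∧ j = b' then 1 else 0), ?_, ?_⟩
    · have hinb : (∑ h' ∈ inN G.Adj b', (z h' b' + if h' = a' ∧ b' = b' then 1 else 0))
          = (∑ h' ∈ inN G.Adj b', z h' b') + 1 := by
        rw [Finset.sum_add_distrib]
        congr 1
        simp [hbin]
      constructor
      · intro i j
        by_cases hc : i = a' ∧ j = b'
        · right; rw [hc.1, hc.2, hzra, if_pos ⟨rfl, rfl⟩]; ring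
        · rcases pf.zero_one i j with h' | h' <;> simp [h', if_neg hc]
      · intro i j hne
        by_cases hc : i = a' ∧ j = b'
        · rw [hc.1, hc.2]; exact h
        · rw [if_neg hc, add_zero] at hne; exact pf.adj i j hne
      · rw [Finset.sum_congr rfl (fun h' _ => by
          rw [if_neg (fun hc => hab hc.2), add_zero])]
        simp [hzla]
      · rw [Finset.sum_add_distrib]
        have h1 : ∑ j ∈ outN G.Adj a', z a' j = 0 := by simp [hzra]
        have h2 : (∑ j ∈ outN G.Adj a', if a' = a' ∧ j = b' then (1:ℝ) else 0) = 1 := by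
          simp [hb]
        rw [h1, h2, if_neg hai0]; ring
      · intro i hia
        by_cases hib : i = b'
        · subst hib
          have houtb : (∑ j ∈ outN G.Adj i, (z i j + if i = a' ∧ j = i then 1 else 0))
              = ∑ j ∈ outN G.Adj i, z i j :=
            Finset.sum_congr rfl (fun j _ => by rw [if_neg (fun hc => hia hc.1), add_zero])
          rw [houtb, hinb, pf.in_src, pf.out_src, zero_add]; ring
        · have hout : (∑ j ∈ outN G.Adj i, (z i j + if i = a' ∧ j = b' then 1 else 0))
              = ∑ j ∈ outN G.Adj i, z i j := by
            refine Finset.sum_congr rfl (fun j _ => by rw [if_neg (fun hc => hia hc.1), add_zero])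
          have hin : (∑ h' ∈ inN G.Adj i, (z h' i + if h' = a' ∧ i = b' then 1 else 0))
              = ∑ h' ∈ inN G.Adj i, z h' i := by
            refine Finset.sum_congr rfl (fun h' _ => by rw [if_neg (fun hc => hib hc.2), add_zero])
          rw [hout, hin]; exact pf.balance i hib
      · intro i
        rw [if_neg hai0, sub_zero]
        by_cases hib : i = b'
        · subst hib
          rw [hinb, pf.in_src]; norm_num
        · have hin : (∑ h' ∈ inN G.Adj i, (z h' i + if h' = a' ∧ i = b' then 1 else 0))
              = ∑ h' ∈ inN G.Adj i, z h' i := by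
            refine Finset.sum_congr rfl (fun h' _ => by rw [if_neg (fun hc => hib hc.2), add_zero])
          rw [hin]
          refine (pf.in_le i).trans ?_
          split <;> norm_num
      · intro i
        rw [if_neg hai0, sub_zero]
        by_cases hia : i = a'
        · subst hia
          rw [Finset.sum_add_distrib]
          have h1 : ∑ j ∈ outN G.Adj i, z i j = 0 := by simp [hzra]
          have h2 : (∑ j ∈ outN G.Adj i, if i = i ∧ j = b' then (1:ℝ) else 0) = 1 := by
            simp [hb]
          rw [h1, h2]; norm_num
        · have hout : (∑ j ∈ outN G.Adj i, (z i j + if i = a' ∧ j = b' then 1 else 0))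
              = ∑ j ∈ outN G.Adj i, z i j := by
            refine Finset.sum_congr rfl (fun j _ => by rw [if_neg (fun hc => hia hc.1), add_zero])
          rw [hout]
          refine (pf.out_le i).trans ?_
          split <;> norm_num
    · intro i j hne
      dsimp only at hne
      rw [SimpleGraph.Walk.support_cons]
      by_cases hc : i = a' ∧ j = b'
      · exact ⟨by rw [hc.1]; exact List.mem_cons_self,
          by rw [hc.2]; exact List.mem_cons_of_mem _ p.start_mem_support⟩
      · rw [if_neg hc, add_zero] at hne
        obtain ⟨h1, h2⟩ := hsupp i j hne
        exact ⟨List.mem_cons_of_mem _ h1, List.mem_cons_of_mem _ h2⟩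

lemma pflow_exists {m : ℕ} (Adj : Fin m → Fin m → Prop) (hsymm : Symmetric Adj)
    (hirr : Irreflexive Adj) (i0 a : Fin m) (h : Relation.ReflTransGen Adj a i0) :
    ∃ z : Fin m → Fin m → ℝ, PFlow Adj i0 a z := by
  let G : SimpleGraph (Fin m) := ⟨Adj, ⟨fun _ _ h => hsymm h⟩, ⟨hirr⟩⟩
  have hr : G.Reachable a i0 := (SimpleGraph.reachable_iff_reflTransGen a i0).mpr h
  obtain ⟨w⟩ := hr
  obtain ⟨z, pf, -⟩ := pflow_of_walk G a i0 w.toPath.1 w.toPath.2.support_nodup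
  exact ⟨z, pf⟩

lemma sInf_le_sInf_aux {A B : Set ℝ} (hBA : B ⊆ A) (hA0 : ∀ r ∈ A, 0 ≤ r)
    (hAB : A.Nonempty → B.Nonempty) : sInf A ≤ sInf B := by
  by_cases hB : B.Nonempty
  · exact le_csInf hB (fun b hb => csInf_le ⟨0, fun r hr => hA0 r hr⟩ (hBA hb))
  · have hA : ¬A.Nonempty := fun h => hB (hAB h)
    rw [Set.not_nonempty_iff_eq_empty] at hA hB
    rw [hA, hB]
/-- The optimal value of the continuous relaxation of formulation (LocP-F1) is at most
the optimal value of the continuous relaxation of formulation (LocP-F2). -/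
theorem stmt_15 {d m n : ℕ}
    (P : Fin m → Set (Fin d → ℝ))
    (Ext : Fin m → Finset (Fin d → ℝ))
    (hExt : ∀ i, (Ext i : Set (Fin d → ℝ)) = Set.extremePoints ℝ (P i))
    (hP : ∀ i, P i = convexHull ℝ (Ext i : Set (Fin d → ℝ)))
    (hdisj : ∀ i j, i ≠ j → interior (P i) ∩ interior (P j) = ∅)
    (p : Fin m → ℝ≥0∞) (hp : ∀ i, 1 ≤ p i)
    (ω : Fin m → ℝ) (hω : ∀ i, 0 < ω i)
    (ExtF : Fin m → Fin m → Finset (Fin d → ℝ))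
    (hExtF : ∀ i j, i ≠ j → (ExtF i j : Set (Fin d → ℝ)) = Set.extremePoints ℝ (P i ∩ P j))
    (hFpoly : ∀ i j, i ≠ j → P i ∩ P j = convexHull ℝ (ExtF i j : Set (Fin d → ℝ)))
    (Adj : Fin m → Fin m → Prop)
    (hAdj : ∀ i j, Adj i j ↔ i ≠ j ∧ (P i ∩ P j).Nonempty)
    (x : Fin n → (Fin d → ℝ)) (w : Fin n → ℝ) (hw : ∀ l, 0 < w l)
    (sl : Fin n → Fin m) (hsl : ∀ l, x l ∈ P (sl l)) :
    sInf {r : ℝ | ∃ (u : Fin m → ℝ) (μ : Fin m → (Fin d → ℝ) → ℝ)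
        (dv : Fin n → Fin m → ℝ) (z : Fin n → Fin m → Fin m → ℝ)
        (lam : Fin n → Fin m → Fin m → (Fin d → ℝ) → ℝ),
        (∀ i, 0 ≤ u i ∧ u i ≤ 1) ∧
        (∀ i, ∀ e ∈ Ext i, 0 ≤ μ i e) ∧
        (∀ l i, 0 ≤ dv l i) ∧
        (∀ l i j, Adj i j → 0 ≤ z l i j ∧ z l i j ≤ 1) ∧
        (∀ l i j, Adj i j → ∀ e ∈ ExtF i j, 0 ≤ lam l i j e) ∧
        ((∑ i, u i) = 1) ∧
        (∀ i, (∑ e ∈ Ext i, μ i e) = u i) ∧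
        (∀ l, (∑ j ∈ outN Adj (sl l), z l (sl l) j)
            - (∑ h ∈ inN Adj (sl l), z l h (sl l)) = 1 - u (sl l)) ∧
        (∀ l i, i ≠ sl l →
          (∑ j ∈ outN Adj i, z l i j) - (∑ h ∈ inN Adj i, z l h i) = -(u i)) ∧
        (∀ l i, (∑ h ∈ inN Adj i, z l h i) ≤ 1 - u (sl l)) ∧
        (∀ l i, (∑ j ∈ outN Adj i, z l i j) ≤ 1 - u (sl l)) ∧
        (∀ l, lpnorm (p (sl l))
            ((∑ e ∈ Ext (sl l), μ (sl l) e • e)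
              + (∑ j ∈ outN Adj (sl l), ∑ e ∈ ExtF (sl l) j, lam l (sl l) j e • e)
              - x l) ≤ dv l (sl l)) ∧
        (∀ l i, i ≠ sl l → lpnorm (p i)
            ((∑ e ∈ Ext i, μ i e • e)
              + (∑ j ∈ outN Adj i, ∑ e ∈ ExtF i j, lam l i j e • e)
              - (∑ h ∈ inN Adj i, ∑ e ∈ ExtF h i, lam l h i e • e)) ≤ dv l i) ∧
        (∀ l i j, Adj i j → (∑ e ∈ ExtF i j, lam l i j e) = z l i j) ∧
        r = ∑ l, ∑ i, w l * ω i * dv l i}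
    ≤ sInf {r : ℝ | ∃ (u : Fin m → ℝ) (μ : Fin m → (Fin d → ℝ) → ℝ)
        (dv : Fin n → Fin m → ℝ) (z : Fin n → Fin m → Fin m → ℝ)
        (lam : Fin n → Fin m → Fin m → (Fin d → ℝ) → ℝ)
        (ρ : Fin n → Fin m → Fin m → Fin m → ℝ)
        (Φ : Fin n → Fin m → Fin m → Fin m → (Fin d → ℝ) → ℝ)
        (Ψ : Fin n → Fin m → Fin m → Fin m → (Fin d → ℝ) → ℝ)
        (Υ : Fin n → Fin m → Fin m → (Fin d → ℝ) → ℝ)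
        (Θ : Fin n → Fin m → Fin m → (Fin d → ℝ) → ℝ),
        (∀ i, 0 ≤ u i ∧ u i ≤ 1) ∧
        (∀ i, ∀ e ∈ Ext i, 0 ≤ μ i e) ∧
        (∀ l i, 0 ≤ dv l i) ∧
        (∀ l i j, Adj i j → 0 ≤ z l i j ∧ z l i j ≤ 1) ∧
        (∀ l i j, Adj i j → ∀ e ∈ ExtF i j, 0 ≤ lam l i j e) ∧
        (∀ l i, i ≠ sl l → ∀ h j, Adj h i → Adj i j → 0 ≤ ρ l h i j) ∧
        (∀ l i, i ≠ sl l → ∀ h j, Adj h i → Adj i j →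
          ∀ e ∈ ExtF h i, 0 ≤ Φ l h i j e) ∧
        (∀ l i, i ≠ sl l → ∀ h j, Adj h i → Adj i j →
          ∀ e ∈ ExtF i j, 0 ≤ Ψ l h i j e) ∧
        (∀ l i, i ≠ sl l → ∀ h, Adj h i → ∀ e ∈ ExtF h i, 0 ≤ Υ l h i e) ∧
        (∀ l i, i ≠ sl l → ∀ h, Adj h i → ∀ e ∈ Ext i, 0 ≤ Θ l h i e) ∧
        ((∑ i, u i) = 1) ∧
        (∀ i, (∑ e ∈ Ext i, μ i e) = u i) ∧
        (∀ l, (∑ j ∈ outN Adj (sl l), z l (sl l) j)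
            - (∑ h ∈ inN Adj (sl l), z l h (sl l)) = 1 - u (sl l)) ∧
        (∀ l i, i ≠ sl l →
          (∑ j ∈ outN Adj i, z l i j) - (∑ h ∈ inN Adj i, z l h i) = -(u i)) ∧
        (∀ l i, (∑ h ∈ inN Adj i, z l h i) ≤ 1 - u (sl l)) ∧
        (∀ l i, (∑ j ∈ outN Adj i, z l i j) ≤ 1 - u (sl l)) ∧
        (∀ l, (∑ j ∈ outN Adj (sl l),
              lpnorm (p (sl l)) ((∑ e ∈ ExtF (sl l) j, lam l (sl l) j e • e)
                - z l (sl l) j • x l))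
            + lpnorm (p (sl l)) ((∑ e ∈ Ext (sl l), μ (sl l) e • e) - u (sl l) • x l)
            ≤ dv l (sl l)) ∧
        (∀ l i, i ≠ sl l →
          (∑ h ∈ inN Adj i, ∑ j ∈ outN Adj i,
              lpnorm (p i) ((∑ e ∈ ExtF i j, Ψ l h i j e • e)
                - (∑ e ∈ ExtF h i, Φ l h i j e • e)))
            + (∑ h ∈ inN Adj i,
              lpnorm (p i) ((∑ e ∈ Ext i, Θ l h i e • e)
                - (∑ e ∈ ExtF h i, Υ l h i e • e)))
            ≤ dv l i) ∧
        (∀ l i j, Adj i j → (∑ e ∈ ExtF i j, lam l i j e) = z l i j) ∧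
        (∀ l i, i ≠ sl l → ∀ h, Adj h i →
          (∑ j ∈ outN Adj i, ρ l h i j) + (∑ e ∈ Ext i, Θ l h i e) = z l h i) ∧
        (∀ l i, i ≠ sl l → ∀ j, Adj i j →
          (∑ h ∈ inN Adj i, ρ l h i j) = z l i j) ∧
        (∀ l i, i ≠ sl l → ∀ h j, Adj h i → Adj i j →
          (∑ e ∈ ExtF h i, Φ l h i j e) = ρ l h i j) ∧
        (∀ l i, i ≠ sl l → ∀ h, Adj h i → ∀ e ∈ ExtF h i,
          (∑ j ∈ outN Adj i, Φ l h i j e) + Υ l h i e = lam l h i e) ∧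
        (∀ l i, i ≠ sl l → ∀ h j, Adj h i → Adj i j →
          (∑ e ∈ ExtF i j, Ψ l h i j e) = ρ l h i j) ∧
        (∀ l i, i ≠ sl l → ∀ j, Adj i j → ∀ e ∈ ExtF i j,
          (∑ h ∈ inN Adj i, Ψ l h i j e) = lam l i j e) ∧
        (∀ l i, i ≠ sl l →
          (∑ h ∈ inN Adj i, ∑ e ∈ ExtF h i, Υ l h i e) = u i) ∧
        (∀ l i, i ≠ sl l →
          (∑ h ∈ inN Adj i, ∑ e ∈ Ext i, Θ l h i e) = u i) ∧
        (∀ l i, i ≠ sl l → ∀ e ∈ Ext i,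
          (∑ h ∈ inN Adj i, Θ l h i e) = μ i e) ∧
        r = ∑ l, ∑ i, w l * ω i * dv l i} := by
  classical
  have hsymm : Symmetric Adj := by
    intro i j hij
    rcases (hAdj i j).mp hij with ⟨hne, hne2⟩
    exact (hAdj j i).mpr ⟨hne.symm, by rwa [Set.inter_comm]⟩
  have hirr : Irreflexive Adj := fun i hii => ((hAdj i i).mp hii).1 rfl
  refine sInf_le_sInf_aux ?_ ?_ ?_
  · rintro r ⟨u, μ, dv, z, lam, ρ, Φ, Ψ, Υ, Θ, c1, c2, c3, c4, c5, c6, c7, c8, c9, c10,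
      c11, c12, c13, c14, c15, c16, c17, c18, c19, c20, c21, c22, c23, c24, c25, c26,
      c27, c28, c29⟩
    refine ⟨u, μ, dv, z, lam, c1, c2, c3, c4, c5, c11, c12, c13, c14, c15, c16, ?_, ?_,
      c19, c29⟩
    · intro l
      have hq := hp (sl l)
      have hin0 : (∑ h ∈ inN Adj (sl l), z l h (sl l)) = 0 := by
        have h1 := c13 l
        have h2 := c16 l (sl l)
        have h3 : 0 ≤ ∑ h ∈ inN Adj (sl l), z l h (sl l) :=
          Finset.sum_nonneg fun h hh => (c4 l h (sl l) (Finset.mem_filter.mp hh).2).1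
        linarith
      have hkey : (∑ j ∈ outN Adj (sl l), z l (sl l) j) + u (sl l) = 1 := by
        have h1 := c13 l
        linarith [hin0]
      have hx : (∑ j ∈ outN Adj (sl l), z l (sl l) j) • x l + u (sl l) • x l = x l := by
        rw [← add_smul, hkey, one_smul]
      have hveq : (∑ e ∈ Ext (sl l), μ (sl l) e • e)
            + (∑ j ∈ outN Adj (sl l), ∑ e ∈ ExtF (sl l) j, lam l (sl l) j e • e) - x l
          = (∑ j ∈ outN Adj (sl l),
              ((∑ e ∈ ExtF (sl l) j, lam l (sl l) j e • e) - z l (sl l) j • x l))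
            + ((∑ e ∈ Ext (sl l), μ (sl l) e • e) - u (sl l) • x l) := by
        rw [Finset.sum_sub_distrib, ← Finset.sum_smul]
        conv_lhs => rw [← hx]
        abel
      rw [hveq]
      refine le_trans (lpnorm_add_le hq _ _) (le_trans ?_ (c17 l))
      exact add_le_add (lpnorm_sum_le hq _ _) le_rfl
    · intro l i hi
      have hq := hp i
      have hA : (∑ e ∈ Ext i, μ i e • e)
          = ∑ h ∈ inN Adj i, ∑ e ∈ Ext i, Θ l h i e • e := by
        rw [Finset.sum_comm]
        exact Finset.sum_congr rfl fun e he => by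
          rw [← c28 l i hi e he, Finset.sum_smul]
      have hB : (∑ j ∈ outN Adj i, ∑ e ∈ ExtF i j, lam l i j e • e)
          = ∑ h ∈ inN Adj i, ∑ j ∈ outN Adj i, ∑ e ∈ ExtF i j, Ψ l h i j e • e := by
        rw [Finset.sum_comm]
        refine Finset.sum_congr rfl fun j hj => ?_
        rw [Finset.sum_comm]
        refine Finset.sum_congr rfl fun e he => ?_
        rw [← c25 l i hi j (Finset.mem_filter.mp hj).2 e he, Finset.sum_smul]
      have hC : (∑ h ∈ inN Adj i, ∑ e ∈ ExtF h i, lam l h i e • e)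
          = (∑ h ∈ inN Adj i, ∑ j ∈ outN Adj i, ∑ e ∈ ExtF h i, Φ l h i j e • e)
            + ∑ h ∈ inN Adj i, ∑ e ∈ ExtF h i, Υ l h i e • e := by
        rw [← Finset.sum_add_distrib]
        refine Finset.sum_congr rfl fun h hh => ?_
        calc (∑ e ∈ ExtF h i, lam l h i e • e)
            = ∑ e ∈ ExtF h i, ((∑ j ∈ outN Adj i, Φ l h i j e • e) + Υ l h i e • e) := by
              refine Finset.sum_congr rfl fun e he => ?_
              rw [← c23 l i hi h (Finset.mem_filter.mp hh).2 e he, add_smul, Finset.sum_smul]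
          _ = (∑ e ∈ ExtF h i, ∑ j ∈ outN Adj i, Φ l h i j e • e)
                + ∑ e ∈ ExtF h i, Υ l h i e • e := Finset.sum_add_distrib
          _ = (∑ j ∈ outN Adj i, ∑ e ∈ ExtF h i, Φ l h i j e • e)
                + ∑ e ∈ ExtF h i, Υ l h i e • e := by rw [Finset.sum_comm]
      have hveq : (∑ e ∈ Ext i, μ i e • e)
            + (∑ j ∈ outN Adj i, ∑ e ∈ ExtF i j, lam l i j e • e)
            - (∑ h ∈ inN Adj i, ∑ e ∈ ExtF h i, lam l h i e • e)
          = (∑ h ∈ inN Adj i, ∑ j ∈ outN Adj i,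
              ((∑ e ∈ ExtF i j, Ψ l h i j e • e) - ∑ e ∈ ExtF h i, Φ l h i j e • e))
            + ∑ h ∈ inN Adj i,
              ((∑ e ∈ Ext i, Θ l h i e • e) - ∑ e ∈ ExtF h i, Υ l h i e • e) := by
        rw [hA, hB, hC]
        simp only [Finset.sum_sub_distrib]
        abel
      rw [hveq]
      refine le_trans (lpnorm_add_le hq _ _) (le_trans ?_ (c18 l i hi))
      refine add_le_add ?_ (lpnorm_sum_le hq _ _)
      exact le_trans (lpnorm_sum_le hq _ _) (Finset.sum_le_sum fun h _ => lpnorm_sum_le hq _ _)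
  · rintro r ⟨u, μ, dv, z, lam, -, -, c3, -, -, -, -, -, -, -, -, -, -, -, rfl⟩
    exact Finset.sum_nonneg fun l _ => Finset.sum_nonneg fun i _ =>
      mul_nonneg (mul_nonneg (hw l).le (hω i).le) (c3 l i)
  · rintro ⟨r, u, μ, dv, z, lam, c1, c2, c3, c4, c5, c6, c7, c8, c9, c10, c11, c12, c13, c14, c15⟩
        -- Construct a feasible point of (LocP-F2)
    have hex : ∃ i, 0 < u i := by
      by_contra hno
      push_neg at hno
      have h0 : (∑ i, u i) ≤ 0 := Finset.sum_nonpos fun i _ => hno i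
      rw [c6] at h0; linarith
    obtain ⟨i0, hi0pos⟩ := hex
    have hExtne : (Ext i0).Nonempty := by
      rw [Finset.nonempty_iff_ne_empty]
      intro hemp
      rw [← c7 i0, hemp, Finset.sum_empty] at hi0pos
      exact lt_irrefl 0 hi0pos
    obtain ⟨e0, he0⟩ := hExtne
    have hreach : ∀ l, Relation.ReflTransGen Adj (sl l) i0 := by
      intro l
      set Rf : Finset (Fin m) :=
        Finset.univ.filter (fun i => Relation.ReflTransGen Adj (sl l) i) with hRf
      have hmemRf : ∀ i, i ∈ Rf ↔ Relation.ReflTransGen Adj (sl l) i := by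
        intro i; simp [hRf]
      have hsRf : sl l ∈ Rf := (hmemRf _).mpr Relation.ReflTransGen.refl
      have hout_eq : ∀ i ∈ Rf, (outN Adj i) = Rf.filter (fun j => Adj i j) := by
        intro i hi
        ext j
        simp only [outN, Finset.mem_filter, Finset.mem_univ, true_and]
        constructor
        · intro ha; exact ⟨(hmemRf j).mpr (((hmemRf i).mp hi).tail ha), ha⟩
        · exact fun h => h.2
      have hin_eq : ∀ i ∈ Rf, (inN Adj i) = Rf.filter (fun h => Adj h i) := by
        intro i hi
        ext h
        simp only [inN, Finset.mem_filter, Finset.mem_univ, true_and]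
        constructor
        · intro ha; exact ⟨(hmemRf h).mpr (((hmemRf i).mp hi).tail (hsymm ha)), ha⟩
        · exact fun h' => h'.2
      have hzero : (∑ i ∈ Rf, ((∑ j ∈ outN Adj i, z l i j) - ∑ h ∈ inN Adj i, z l h i)) = 0 := by
        rw [Finset.sum_sub_distrib]
        have e1 : (∑ i ∈ Rf, ∑ j ∈ outN Adj i, z l i j)
            = ∑ i ∈ Rf, ∑ j ∈ Rf, if Adj i j then z l i j else 0 := by
          refine Finset.sum_congr rfl fun i hi => ?_
          rw [hout_eq i hi, Finset.sum_filter]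
        have e2 : (∑ i ∈ Rf, ∑ h ∈ inN Adj i, z l h i)
            = ∑ i ∈ Rf, ∑ h ∈ Rf, if Adj h i then z l h i else 0 := by
          refine Finset.sum_congr rfl fun i hi => ?_
          rw [hin_eq i hi, Finset.sum_filter]
        rw [e1, e2, Finset.sum_comm]
        exact sub_self _
      have hflowsum : (∑ i ∈ Rf, ((∑ j ∈ outN Adj i, z l i j) - ∑ h ∈ inN Adj i, z l h i))
          = 1 - ∑ i ∈ Rf, u i := by
        rw [← Finset.add_sum_erase _ _ hsRf, c8 l,
          Finset.sum_congr rfl (fun i hi => c9 l i (Finset.ne_of_mem_erase hi)),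
          ← Finset.add_sum_erase _ u hsRf]
        rw [Finset.sum_neg_distrib]
        ring
      have hsumRf : ∑ i ∈ Rf, u i = 1 := by
        rw [hzero] at hflowsum; linarith
      have hi0Rf : i0 ∈ Rf := by
        by_contra hni
        have hsd := Finset.sum_sdiff (f := u) (Finset.subset_univ Rf)
        rw [c6, hsumRf] at hsd
        have hnn : ∀ i ∈ Finset.univ \ Rf, 0 ≤ u i := fun i _ => (c1 i).1
        have h0 : u i0 = 0 :=
          (Finset.sum_eq_zero_iff_of_nonneg hnn).mp (by linarith) i0
            (Finset.mem_sdiff.mpr ⟨Finset.mem_univ _, hni⟩)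
        linarith
      exact (hmemRf i0).mp hi0Rf
    have hZex := fun l => pflow_exists Adj hsymm hirr i0 (sl l) (hreach l)
    choose Z pf using hZex
    have hExtFne : ∀ i j, Adj i j → (ExtF i j).Nonempty := by
      intro i j ha
      rcases (hAdj i j).mp ha with ⟨hne, hne2⟩
      rw [hFpoly i j hne] at hne2
      rw [← Finset.coe_nonempty]
      by_contra hg
      rw [Set.not_nonempty_iff_eq_empty] at hg
      rw [hg, convexHull_empty] at hne2
      exact Set.not_nonempty_empty hne2
    set ce : Fin m → Fin m → (Fin d → ℝ) :=
      fun i j => if hne : (ExtF i j).Nonempty then hne.choose else 0 with hce_def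
    have hce : ∀ i j, Adj i j → ce i j ∈ ExtF i j := by
      intro i j ha
      have hne := hExtFne i j ha
      simp only [hce_def, dif_pos hne]
      exact hne.choose_spec
    set U : Fin m → ℝ := fun i => if i = i0 then 1 else 0 with hU
    set M : Fin m → (Fin d → ℝ) → ℝ := fun i e => if i = i0 ∧ e = e0 then 1 else 0 with hM
    have hUnn : ∀ i, 0 ≤ U i := by
      intro i; simp only [hU]; split <;> norm_num
    have hMnn : ∀ i e, 0 ≤ M i e := by
      intro i e; simp only [hM]; split <;> norm_num
    have hMsum : ∀ i, (∑ e ∈ Ext i, M i e) = U i := by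
      intro i
      simp only [hM, hU]
      by_cases hii : i = i0
      · subst hii
        rw [if_pos rfl,
          Finset.sum_congr rfl (fun e _ => if_congr (and_iff_right rfl) rfl rfl),
          sum_ind _ _ he0]
      · rw [if_neg hii]
        exact Finset.sum_eq_zero fun e _ => if_neg fun hc => hii hc.1
    have hZ01 : ∀ l i j, 0 ≤ Z l i j ∧ Z l i j ≤ 1 := by
      intro l i j; rcases (pf l).zero_one i j with h | h <;> rw [h] <;> norm_num
    have hinnn : ∀ l i, 0 ≤ ∑ h ∈ inN Adj i, Z l h i :=
      fun l i => Finset.sum_nonneg fun h _ => (hZ01 l h i).1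
    have houtnn : ∀ l i, 0 ≤ ∑ j ∈ outN Adj i, Z l i j :=
      fun l i => Finset.sum_nonneg fun j _ => (hZ01 l i j).1
    have hin_le1 : ∀ l i, (∑ h ∈ inN Adj i, Z l h i) ≤ 1 := by
      intro l i
      refine ((pf l).in_le i).trans ?_
      split <;> norm_num
    have hKin : ∀ l i, i ≠ sl l → ∀ h, Adj h i → Z l h i ≠ 0 →
        (∑ j ∈ outN Adj i, Z l i j) + U i = 1 := by
      intro l i hi h ha hz
      have h1 : Z l h i = 1 := ((pf l).zero_one h i).resolve_left hz
      have hmem : h ∈ inN Adj i := by simp [inN, ha]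
      have h2 : (1:ℝ) ≤ ∑ h' ∈ inN Adj i, Z l h' i := by
        rw [← h1]
        exact Finset.single_le_sum (fun h' _ => (hZ01 l h' i).1) hmem
      have h3 := hin_le1 l i
      have h4 := (pf l).balance i hi
      simp only [hU]
      linarith
    have hKout : ∀ l i, i ≠ sl l → ∀ j, Adj i j → Z l i j ≠ 0 →
        (∑ h ∈ inN Adj i, Z l h i) = 1 := by
      intro l i hi j ha hz
      have h1 : Z l i j = 1 := ((pf l).zero_one i j).resolve_left hz
      have hmem : j ∈ outN Adj i := by simp [outN, ha]
      have h2 : (1:ℝ) ≤ ∑ j' ∈ outN Adj i, Z l i j' := by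
        rw [← h1]
        exact Finset.single_le_sum (fun j' _ => (hZ01 l i j').1) hmem
      have h4 := (pf l).balance i hi
      have h3 := hin_le1 l i
      have h5 : (0:ℝ) ≤ if i = i0 then (1:ℝ) else 0 := by split <;> norm_num
      linarith
    have hKu : ∀ l, i0 ≠ sl l → (∑ h ∈ inN Adj i0, Z l h i0) = 1 := by
      intro l hi
      have h4 := (pf l).balance i0 hi
      rw [if_pos rfl] at h4
      have h3 := hin_le1 l i0
      have h5 := houtnn l i0
      linarith
    set lam' : Fin n → Fin m → Fin m → (Fin d → ℝ) → ℝ :=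
      fun l i j e => Z l i j * (if e = ce i j then 1 else 0) with hlam'
    set ρ' : Fin n → Fin m → Fin m → Fin m → ℝ :=
      fun l h i j => Z l h i * Z l i j with hρ'
    set Φ' : Fin n → Fin m → Fin m → Fin m → (Fin d → ℝ) → ℝ :=
      fun l h i j e => (Z l h i * Z l i j) * (if e = ce h i then 1 else 0) with hΦ'
    set Ψ' : Fin n → Fin m → Fin m → Fin m → (Fin d → ℝ) → ℝ :=
      fun l h i j e => (Z l h i * Z l i j) * (if e = ce i j then 1 else 0) with hΨ'
    set Υ' : Fin n → Fin m → Fin m → (Fin d → ℝ) → ℝ :=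
      fun l h i e => (Z l h i * U i) * (if e = ce h i then 1 else 0) with hΥ'
    set Θ' : Fin n → Fin m → Fin m → (Fin d → ℝ) → ℝ :=
      fun l h i e => Z l h i * M i e with hΘ'
    set dv' : Fin n → Fin m → ℝ := fun l i =>
      if i = sl l then
        (∑ j ∈ outN Adj (sl l),
            lpnorm (p (sl l)) ((∑ e ∈ ExtF (sl l) j, lam' l (sl l) j e • e)
              - Z l (sl l) j • x l))
          + lpnorm (p (sl l)) ((∑ e ∈ Ext (sl l), M (sl l) e • e) - U (sl l) • x l)
      else
        (∑ h ∈ inN Adj i, ∑ j ∈ outN Adj i,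
            lpnorm (p i) ((∑ e ∈ ExtF i j, Ψ' l h i j e • e)
              - ∑ e ∈ ExtF h i, Φ' l h i j e • e))
          + ∑ h ∈ inN Adj i,
            lpnorm (p i) ((∑ e ∈ Ext i, Θ' l h i e • e) - ∑ e ∈ ExtF h i, Υ' l h i e • e)
      with hdv'
    refine ⟨∑ l, ∑ i, w l * ω i * dv' l i, U, M, dv', Z, lam', ρ', Φ', Ψ', Υ', Θ',
      ?_, ?_, ?_, ?_, ?_, ?_, ?_, ?_, ?_, ?_, ?_, ?_, ?_, ?_, ?_, ?_, ?_, ?_, ?_, ?_,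
      ?_, ?_, ?_, ?_, ?_, ?_, ?_, ?_, rfl⟩
    · intro i; simp only [hU]; constructor <;> split <;> norm_num
    · intro i e _; exact hMnn i e
    · intro l i
      simp only [hdv']
      split
      · exact add_nonneg (Finset.sum_nonneg fun j _ => lpnorm_nonneg (hp (sl l)) _)
          (lpnorm_nonneg (hp (sl l)) _)
      · exact add_nonneg
          (Finset.sum_nonneg fun h _ => Finset.sum_nonneg fun j _ => lpnorm_nonneg (hp i) _)
          (Finset.sum_nonneg fun h _ => lpnorm_nonneg (hp i) _)
    · intro l i j _; exact hZ01 l i j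
    · intro l i j _ e _
      simp only [hlam']
      exact mul_nonneg (hZ01 l i j).1 (by split <;> norm_num)
    · intro l i _ h j _ _
      simp only [hρ']
      exact mul_nonneg (hZ01 l h i).1 (hZ01 l i j).1
    · intro l i _ h j _ _ e _
      simp only [hΦ']
      exact mul_nonneg (mul_nonneg (hZ01 l h i).1 (hZ01 l i j).1) (by split <;> norm_num)
    · intro l i _ h j _ _ e _
      simp only [hΨ']
      exact mul_nonneg (mul_nonneg (hZ01 l h i).1 (hZ01 l i j).1) (by split <;> norm_num)
    · intro l i _ h _ e _
      simp only [hΥ']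
      exact mul_nonneg (mul_nonneg (hZ01 l h i).1 (hUnn i)) (by split <;> norm_num)
    · intro l i _ h _ e _
      simp only [hΘ']
      exact mul_nonneg (hZ01 l h i).1 (hMnn i e)
    · simp only [hU]
      exact sum_ind _ _ (Finset.mem_univ i0)
    · exact hMsum
    · intro l
      rw [(pf l).out_src, (pf l).in_src, sub_zero]
    · intro l i hi
      have h4 := (pf l).balance i hi
      simp only [hU]
      linarith
    · intro l i
      refine ((pf l).in_le i).trans ?_
      simp only [hU]
      exact le_rfl
    · intro l i
      refine ((pf l).out_le i).trans ?_
      simp only [hU]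
      exact le_rfl
    · intro l
      simp only [hdv', if_pos rfl]
      exact le_rfl
    · intro l i hi
      simp only [hdv', if_neg hi]
      exact le_rfl
    · intro l i j ha
      simp only [hlam']
      rw [← Finset.mul_sum, sum_ind _ _ (hce i j ha), mul_one]
    · intro l i hi h ha
      simp only [hρ', hΘ']
      rw [← Finset.mul_sum, ← Finset.mul_sum, ← mul_add, hMsum i]
      by_cases hz : Z l h i = 0
      · rw [hz]; ring
      · rw [hKin l i hi h ha hz, mul_one]
    · intro l i hi j ha
      simp only [hρ']
      rw [← Finset.sum_mul]
      by_cases hz : Z l i j = 0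
      · rw [hz, mul_zero]
      · rw [hKout l i hi j ha hz, one_mul]
    · intro l i _ h j hhi _
      simp only [hΦ', hρ']
      rw [← Finset.mul_sum, sum_ind _ _ (hce h i hhi), mul_one]
    · intro l i hi h hhi e _
      simp only [hΦ', hΥ', hlam']
      rw [← Finset.sum_mul, ← Finset.mul_sum]
      by_cases hz : Z l h i = 0
      · rw [hz]; ring
      · have hk := hKin l i hi h hhi hz
        calc (Z l h i * ∑ j ∈ outN Adj i, Z l i j) * (if e = ce h i then 1 else 0)
              + (Z l h i * U i) * (if e = ce h i then 1 else 0)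
            = Z l h i * ((∑ j ∈ outN Adj i, Z l i j) + U i)
                * (if e = ce h i then 1 else 0) := by ring
          _ = Z l h i * (if e = ce h i then 1 else 0) := by rw [hk]; ring
    · intro l i _ h j _ hij
      simp only [hΨ', hρ']
      rw [← Finset.mul_sum, sum_ind _ _ (hce i j hij), mul_one]
    · intro l i hi j hij e _
      simp only [hΨ', hlam']
      rw [← Finset.sum_mul, ← Finset.sum_mul]
      by_cases hz : Z l i j = 0
      · rw [hz]; ring
      · rw [hKout l i hi j hij hz, one_mul]
    · intro l i hi
      simp only [hΥ']
      rw [Finset.sum_congr rfl (fun h hh => by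
        rw [← Finset.mul_sum, sum_ind _ _ (hce h i (Finset.mem_filter.mp hh).2), mul_one]),
        ← Finset.sum_mul]
      by_cases hii : i = i0
      · subst hii
        have hU1 : U i = 1 := by simp [hU]
        rw [hU1, mul_one]
        exact hKu l hi
      · have hU0 : U i = 0 := by simp [hU, hii]
        rw [hU0, mul_zero]
    · intro l i hi
      simp only [hΘ']
      rw [Finset.sum_congr rfl (fun h _ => by rw [← Finset.mul_sum, hMsum i]),
        ← Finset.sum_mul]
      by_cases hii : i = i0
      · subst hii
        have hU1 : U i = 1 := by simp [hU]
        rw [hU1, mul_one]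
        exact hKu l hi
      · have hU0 : U i = 0 := by simp [hU, hii]
        rw [hU0, mul_zero]
    · intro l i hi e _
      simp only [hΘ']
      rw [← Finset.sum_mul]
      by_cases hc : M i e = 0
      · rw [hc, mul_zero]
      · have hii : i = i0 := by
          by_contra hii
          exact hc (by simp [hM, hii])
        subst hii
        rw [hKu l hi, one_mul]
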